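/- Let n ≥ 1 and let f : {0,1}^n → ℝ be the function with f(x_∅) = 1 (the all-zeros point) and f(x_I) = 0 for every nonempty I ⊆ N; equivalently f(x) = 1 − Σ_{∅≠I⊆N} (−1)^{|I|} Π_{i∈I} x_i as a multilinear polynomial. Then f has an integrality gap at level n−1: there exists a family of reals {y_I^N : I ⊆ N} with Σ_{I⊆N} y_I^N = 1, y_∅^N < 0, y_J^N > 0 for all nonempty J ⊆ N, Σ_{I⊆N} 1/y_I^N ≤ 0, and Σ_{I⊆N} y_I^N f(x_I) = y_∅^N < 0. -/

import Mathlib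

open Finset

/-- The indicator of the all-zeros point (the multilinear polynomial
`f(x) = 1 - ∑_{∅ ≠ I ⊆ N} (-1)^{|I|} ∏_{i∈I} x_i`) has an integrality gap at level
`n-1`: there is a family `{y_I^N}` satisfying the gap conditions of Theorem 2 of the
paper, with objective value `y_∅^N < 0`. -/
theorem indicator_of_zero_has_gap (n : ℕ) (hn : 1 ≤ n)
    (F : Finset (Fin n) → ℝ)
    (hF : ∀ I : Finset (Fin n), F I = if I = ∅ then 1 else 0) :
    ∃ Y : Finset (Fin n) → ℝ,
      (∑ I : Finset (Fin n), Y I = 1) ∧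
      Y ∅ < 0 ∧
      (∀ J : Finset (Fin n), J ≠ ∅ → 0 < Y J) ∧
      (∑ I : Finset (Fin n), 1 / Y I ≤ 0) ∧
      (∑ I : Finset (Fin n), Y I * F I) = Y ∅ ∧
      (∑ I : Finset (Fin n), Y I * F I) < 0 := by
  set m : ℝ := (2:ℝ)^n - 1 with hm
  have h2 : (2:ℝ) ≤ 2^n := by
    calc (2:ℝ) = 2^1 := (pow_one 2).symm
    _ ≤ 2^n := pow_le_pow_right₀ (by norm_num) hn
  have hm1 : (1:ℝ) ≤ m := by simp only [hm]; linarith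
  have hm0 : (0:ℝ) < m := lt_of_lt_of_le one_pos hm1
  have key : ∀ a c : ℝ, ∑ I : Finset (Fin n), (if I = ∅ then a else c)
      = a + ((2:ℝ)^n - 1) * c := by
    intro a c
    have h : ∀ I : Finset (Fin n),
        (if I = ∅ then a else c) = (if I = ∅ then a - c else 0) + c := by
      intro I; split <;> ring
    rw [Finset.sum_congr rfl (fun I _ => h I), Finset.sum_add_distrib,
      Finset.sum_ite_eq' Finset.univ (∅ : Finset (Fin n)) (fun _ => a - c),
      Finset.sum_const, Finset.card_univ, Fintype.card_finset, Fintype.card_fin]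
    simp only [Finset.mem_univ, if_true, nsmul_eq_mul]
    push_cast
    ring
  refine ⟨fun I => if I = ∅ then -1/m^2 else (1 + 1/m^2)/m, ?_, ?_, ?_, ?_, ?_, ?_⟩
  · rw [key]
    rw [show ((2:ℝ)^n - 1) = m from rfl]
    field_simp
    ring
  · show (if (∅ : Finset (Fin n)) = ∅ then -1/m^2 else (1 + 1/m^2)/m) < 0
    rw [if_pos rfl, neg_div]
    have : (0:ℝ) < 1/m^2 := by positivity
    linarith
  · intro J hJ
    simp only [if_neg hJ]
    positivity
  · have hrw : ∀ I : Finset (Fin n),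
        1 / (if I = ∅ then -1/m^2 else (1 + 1/m^2)/m)
        = (if I = ∅ then 1/(-1/m^2) else 1/((1 + 1/m^2)/m)) := by
      intro I; split <;> rfl
    rw [Finset.sum_congr rfl (fun I _ => hrw I), key,
      show ((2:ℝ)^n - 1) = m from rfl]
    have hp : (0:ℝ) < 1 + 1/m^2 := by positivity
    have hq : (0:ℝ) < m^2 + 1 := by positivity
    have e1 : 1/(-1/m^2) = -m^2 := by field_simp
    have e2 : 1/((1 + 1/m^2)/m) = m^3/(m^2+1) := by
      rw [div_eq_div_iff (by positivity) hq.ne']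
      field_simp
    rw [e1, e2]
    have e3 : m * (m^3/(m^2+1)) = m^4/(m^2+1) := by ring
    have h4 : m^4/(m^2+1) ≤ m^2 := by
      rw [div_le_iff₀ hq]; nlinarith
    rw [e3]; linarith
  · have hrw : ∀ I : Finset (Fin n),
        (if I = ∅ then -1/m^2 else (1 + 1/m^2)/m) * F I
        = (if I = ∅ then -1/m^2 else 0) := by
      intro I
      rw [hF I]
      split <;> ring
    rw [Finset.sum_congr rfl (fun I _ => hrw I),
      Finset.sum_ite_eq' Finset.univ (∅ : Finset (Fin n)) (fun _ => -1/m^2)]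
    simp
  · have hrw : ∀ I : Finset (Fin n),
        (if I = ∅ then -1/m^2 else (1 + 1/m^2)/m) * F I
        = (if I = ∅ then -1/m^2 else 0) := by
      intro I
      rw [hF I]
      split <;> ring
    rw [Finset.sum_congr rfl (fun I _ => hrw I),
      Finset.sum_ite_eq' Finset.univ (∅ : Finset (Fin n)) (fun _ => -1/m^2)]
    simp only [Finset.mem_univ, if_true]
    rw [neg_div]
    have : (0:ℝ) < 1/m^2 := by positivity
    linarith
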